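/- arXiv:2004.14606 — 2 statements merged into one kernel-verified Lean document; each statement's English description precedes it below -/
import Mathlib

section
/- Let Ω ⊆ ℂⁿ be open, let Φ : Ω → ℝ be twice continuously real-differentiable, and let x₀ ∈ Ω be such that the Levi form L_Φ(x₀) is positive definite. Then there exist an open neighborhood V ⊆ Ω of x₀ and δ > 0 such that for all x, y ∈ V one has Φ(y) − Im((x−y)·θ(x,y)) ≤ Φ(x) − δ|x−y|². -/
open Complex MeasureTheory

noncomputable section

/-- `ℂⁿ` with its Euclidean (Hermitian) norm. -/
abbrev En (n : ℕ) := EuclideanSpace ℂ (Fin n)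

/-- The second real Fréchet derivative `D²Φ(y)(ξ,η)`. -/
def D2R (n : ℕ) (Φ : En n → ℝ) (y ξ η : En n) : ℝ :=
  fderiv ℝ (fderiv ℝ Φ) y ξ η

/-- The Levi form `L_Φ(y)(ξ) = (1/4)(D²Φ(y)(ξ,ξ) + D²Φ(y)(iξ,iξ))`. -/
def Levi (n : ℕ) (Φ : En n → ℝ) (y ξ : En n) : ℝ :=
  (1/4) * (D2R n Φ y ξ ξ + D2R n Φ y (Complex.I • ξ) (Complex.I • ξ))

/-- The Wirtinger differential `A_Φ(y)(ξ) = (1/2)(DΦ(y)(ξ) − i·DΦ(y)(iξ))`. -/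
def Aform (n : ℕ) (Φ : En n → ℝ) (y ξ : En n) : ℂ :=
  (1/2 : ℂ) * ((fderiv ℝ Φ y ξ : ℂ) - Complex.I * (fderiv ℝ Φ y (Complex.I • ξ) : ℂ))

/-- The holomorphic Hessian
`B_Φ(y)(ξ,η) = (1/4)(D²Φ(y)(ξ,η) − D²Φ(y)(iξ,iη)) − (i/4)(D²Φ(y)(ξ,iη) + D²Φ(y)(iξ,η))`. -/
def Bform (n : ℕ) (Φ : En n → ℝ) (y ξ η : En n) : ℂ :=
  (1/4 : ℂ) * ((D2R n Φ y ξ η : ℂ) - (D2R n Φ y (Complex.I • ξ) (Complex.I • η) : ℂ))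
    - (Complex.I/4) * ((D2R n Φ y ξ (Complex.I • η) : ℂ) + (D2R n Φ y (Complex.I • ξ) η : ℂ))

/-- `(x−y)·θ(x,y) = −2i(A_Φ(y)(x−y) + (1/2)B_Φ(y)(x−y, x−y))`. -/
def dotTheta (n : ℕ) (Φ : En n → ℝ) (x y : En n) : ℂ :=
  (-2) * Complex.I * (Aform n Φ y (x - y) + (1/2 : ℂ) * Bform n Φ y (x - y) (x - y))

/-- Second-order lower bound on a convex set, via 1-D reduction. -/
lemma taylor_lower {E : Type*} [NormedAddCommGroup E] [NormedSpace ℝ E]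
    (f : E → ℝ) (f' : E → E →L[ℝ] ℝ) (f'' : E → E →L[ℝ] E →L[ℝ] ℝ)
    (s : Set E) (hs : Convex ℝ s)
    (hf' : ∀ z ∈ s, HasFDerivAt f (f' z) z)
    (hf'' : ∀ z ∈ s, HasFDerivAt f' (f'' z) z)
    (x y : E) (hx : x ∈ s) (hy : y ∈ s) (M : ℝ)
    (hM : ∀ z ∈ s, M ≤ f'' z (x - y) (x - y)) :
    f y + f' y (x - y) + M / 2 ≤ f x := by
  set h := x - y with hh
  have hseg : ∀ t : ℝ, t ∈ Set.Icc (0:ℝ) 1 → y + t • h ∈ s := by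
    intro t ht
    have := hs hy hx (a := 1 - t) (b := t) (by linarith [ht.1, ht.2]) ht.1 (by ring)
    convert this using 1
    simp [hh]
    module
  have hline : ∀ t : ℝ, HasDerivAt (fun t : ℝ => y + t • h) h t := by
    intro t
    simpa using ((hasDerivAt_id t).smul_const h).const_add y
  have hg' : ∀ t ∈ Set.Icc (0:ℝ) 1,
      HasDerivAt (fun t : ℝ => f (y + t • h)) (f' (y + t • h) h) t := by
    intro t ht
    exact (hf' _ (hseg t ht)).comp_hasDerivAt t (hline t)
  have hg'' : ∀ t ∈ Set.Icc (0:ℝ) 1,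
      HasDerivAt (fun t : ℝ => f' (y + t • h) h) (f'' (y + t • h) h h) t := by
    intro t ht
    have h1 : HasDerivAt (fun t : ℝ => f' (y + t • h)) (f'' (y + t • h) h) t :=
      (hf'' _ (hseg t ht)).comp_hasDerivAt t (hline t)
    simpa using h1.clm_apply (hasDerivAt_const t h)
  set φ : ℝ → ℝ := fun t => f' (y + t • h) h - f' y h - M * t with hφ
  have hφ' : ∀ t ∈ Set.Icc (0:ℝ) 1, HasDerivAt φ (f'' (y + t • h) h h - M) t := by
    intro t ht
    exact (((hg'' t ht).sub_const _).sub ((hasDerivAt_id t).const_mul M)).congr_deriv (by ring)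
  have hφmono : MonotoneOn φ (Set.Icc 0 1) := by
    apply monotoneOn_of_deriv_nonneg (convex_Icc 0 1)
    · intro t ht
      exact (hφ' t ht).continuousAt.continuousWithinAt
    · intro t ht
      rw [interior_Icc] at ht
      exact (hφ' t (Set.mem_Icc_of_Ioo ht)).differentiableAt.differentiableWithinAt
    · intro t ht
      rw [interior_Icc] at ht
      rw [(hφ' t (Set.mem_Icc_of_Ioo ht)).deriv]
      have := hM _ (hseg t (Set.mem_Icc_of_Ioo ht))
      linarith
  have hφ0 : φ 0 = 0 := by simp [hφ]
  have hφnn : ∀ t ∈ Set.Icc (0:ℝ) 1, 0 ≤ φ t := by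
    intro t ht
    have := hφmono (Set.left_mem_Icc.mpr one_pos.le) ht ht.1
    rw [hφ0] at this; exact this
  set ψ : ℝ → ℝ := fun t => f (y + t • h) - f y - f' y h * t - M * t ^ 2 / 2 with hψ
  have hψ' : ∀ t ∈ Set.Icc (0:ℝ) 1, HasDerivAt ψ (φ t) t := by
    intro t ht
    have : HasDerivAt ψ (f' (y + t • h) h - (f' y h * 1) - M * (2 * t ^ 1) / 2) t := by
      exact ((((hg' t ht).sub_const _).sub ((hasDerivAt_id t).const_mul (f' y h) |>.congr_deriv (by ring))).sub
        (((hasDerivAt_pow 2 t).const_mul M).div_const 2))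
    convert this using 1
    simp [hφ]; ring
  have hψmono : MonotoneOn ψ (Set.Icc 0 1) := by
    apply monotoneOn_of_deriv_nonneg (convex_Icc 0 1)
    · intro t ht
      exact (hψ' t ht).continuousAt.continuousWithinAt
    · intro t ht
      rw [interior_Icc] at ht
      exact (hψ' t (Set.mem_Icc_of_Ioo ht)).differentiableAt.differentiableWithinAt
    · intro t ht
      rw [interior_Icc] at ht
      rw [(hψ' t (Set.mem_Icc_of_Ioo ht)).deriv]
      exact hφnn t (Set.mem_Icc_of_Ioo ht)
  have h01 := hψmono (Set.left_mem_Icc.mpr one_pos.le) (Set.right_mem_Icc.mpr one_pos.le) one_pos.le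
  have hψ0 : ψ 0 = 0 := by simp [hψ]
  have hψ1 : ψ 1 = f x - f y - f' y h - M / 2 := by simp [hψ, hh]
  rw [hψ0, hψ1] at h01
  linarith

lemma im_dotTheta (n : ℕ) (Φ : En n → ℝ) (x y : En n) :
    (dotTheta n Φ x y).im = -(fderiv ℝ Φ y (x-y))
      - D2R n Φ y (x-y) (x-y)/4 + D2R n Φ y (Complex.I•(x-y)) (Complex.I•(x-y))/4 := by
  simp [dotTheta, Aform, Bform, Complex.mul_im, Complex.add_im, Complex.sub_im,
    Complex.add_re, Complex.sub_re, Complex.mul_re, Complex.div_im, Complex.div_re,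
    Complex.ofReal_im, Complex.ofReal_re, Complex.I_im, Complex.I_re]
  ring

lemma levi_smul (n : ℕ) (Φ : En n → ℝ) (y ξ : En n) (r : ℝ) :
    Levi n Φ y (r • ξ) = r^2 * Levi n Φ y ξ := by
  have hswap : Complex.I • (r • ξ) = r • (Complex.I • ξ) := smul_comm _ _ _
  simp [Levi, D2R, hswap, _root_.map_smul]
  ring

/-- if `Φ` is `C²` on an open `Ω ⊆ ℂⁿ` and the Levi form of `Φ` at `x₀ ∈ Ω` is
positive definite, then on a small neighborhood `V` of `x₀` one has
`Φ(y) − Im((x−y)·θ(x,y)) ≤ Φ(x) − δ|x−y|²` for some `δ > 0` and all `x, y ∈ V`. -/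
theorem statement0 (n : ℕ)
    (Ω : Set (En n)) (hΩ : IsOpen Ω)
    (Φ : En n → ℝ) (hΦ : ContDiffOn ℝ 2 Φ Ω)
    (x₀ : En n) (hx₀ : x₀ ∈ Ω)
    (hLevi : ∀ ξ : En n, ξ ≠ 0 → 0 < Levi n Φ x₀ ξ) :
    ∃ V : Set (En n), IsOpen V ∧ x₀ ∈ V ∧ V ⊆ Ω ∧
      ∃ δ : ℝ, 0 < δ ∧ ∀ x ∈ V, ∀ y ∈ V,
        Φ y - (dotTheta n Φ x y).im ≤ Φ x - δ * ‖x - y‖ ^ 2 := by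
  classical
  -- regularity facts
  have hΦ1 : ContDiffOn ℝ 1 (fderiv ℝ Φ) Ω := hΦ.fderiv_of_isOpen hΩ (by norm_num)
  have hD1 : ∀ z ∈ Ω, HasFDerivAt Φ (fderiv ℝ Φ z) z := fun z hz =>
    ((hΦ.differentiableOn (by norm_num)).differentiableAt (hΩ.mem_nhds hz)).hasFDerivAt
  have hD2 : ∀ z ∈ Ω, HasFDerivAt (fderiv ℝ Φ) (fderiv ℝ (fderiv ℝ Φ) z) z := fun z hz =>
    ((hΦ1.differentiableOn (by norm_num)).differentiableAt (hΩ.mem_nhds hz)).hasFDerivAt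
  have hD2cont : ContinuousOn (fderiv ℝ (fderiv ℝ Φ)) Ω :=
    hΦ1.continuousOn_fderiv_of_isOpen hΩ le_rfl
  -- a positive lower bound for the Levi form at x₀
  obtain ⟨c, hc, hcb⟩ : ∃ c : ℝ, 0 < c ∧ ∀ ξ : En n, c * ‖ξ‖ ^ 2 ≤ Levi n Φ x₀ ξ := by
    rcases (Metric.sphere (0 : En n) 1).eq_empty_or_nonempty with hS | hS
    · refine ⟨1, one_pos, fun ξ => ?_⟩
      have hξ : ξ = 0 := by
        by_contra hne
        have : ‖ξ‖⁻¹ • ξ ∈ Metric.sphere (0 : En n) 1 := by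
          simp [norm_smul, inv_mul_cancel₀ (norm_ne_zero_iff.mpr hne),
            _root_.abs_of_nonneg (inv_nonneg.mpr (norm_nonneg ξ))]
        rw [hS] at this
        exact this
      simp [hξ, Levi, D2R]
    · have hcont : ContinuousOn (fun ξ => Levi n Φ x₀ ξ) (Metric.sphere (0:En n) 1) := by
        apply Continuous.continuousOn
        unfold Levi D2R
        fun_prop
      obtain ⟨u, hu, humin⟩ := (isCompact_sphere (0:En n) 1).exists_isMinOn hS hcont
      have hunorm : ‖u‖ = 1 := by simpa using hu
      have hune : u ≠ 0 := by intro h; rw [h] at hunorm; simp at hunorm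
      refine ⟨Levi n Φ x₀ u, hLevi u hune, fun ξ => ?_⟩
      rcases eq_or_ne ξ 0 with rfl | hne
      · simp [Levi, D2R]
      · have hnξ : (0:ℝ) < ‖ξ‖ := norm_pos_iff.mpr hne
        have hmem : ‖ξ‖⁻¹ • ξ ∈ Metric.sphere (0:En n) 1 := by
          simp [norm_smul, inv_mul_cancel₀ hnξ.ne',
            _root_.abs_of_nonneg (inv_nonneg.mpr (norm_nonneg ξ))]
        have h1 := humin hmem
        have h2 : Levi n Φ x₀ ξ = ‖ξ‖^2 * Levi n Φ x₀ (‖ξ‖⁻¹ • ξ) := by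
          rw [← levi_smul]
          congr 1
          rw [smul_smul, mul_inv_cancel₀ hnξ.ne', one_smul]
        rw [h2, mul_comm]
        have : Levi n Φ x₀ u ≤ Levi n Φ x₀ (‖ξ‖⁻¹ • ξ) := h1
        nlinarith [sq_nonneg ‖ξ‖]
  -- a ball where the second derivative is close to its value at x₀
  have hev : ∀ᶠ z in nhds x₀,
      ‖fderiv ℝ (fderiv ℝ Φ) z - fderiv ℝ (fderiv ℝ Φ) x₀‖ < c/2 := by
    have h0 := (hD2cont.continuousAt (hΩ.mem_nhds hx₀)).eventually
      (Metric.ball_mem_nhds (fderiv ℝ (fderiv ℝ Φ) x₀) (half_pos hc))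
    filter_upwards [h0] with z hz
    exact (dist_eq_norm (E := En n →L[ℝ] En n →L[ℝ] ℝ) _ _) ▸ hz
  obtain ⟨r, hr, hball⟩ : ∃ r > 0, Metric.ball x₀ r ⊆ Ω ∩
      {z | ‖fderiv ℝ (fderiv ℝ Φ) z - fderiv ℝ (fderiv ℝ Φ) x₀‖ < c/2} := by
    have : Ω ∩ {z | ‖fderiv ℝ (fderiv ℝ Φ) z - fderiv ℝ (fderiv ℝ Φ) x₀‖ < c/2}
        ∈ nhds x₀ := Filter.inter_mem (hΩ.mem_nhds hx₀) hev
    exact Metric.mem_nhds_iff.mp this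
  have hVΩ : Metric.ball x₀ r ⊆ Ω := fun z hz => (hball hz).1
  -- quadratic-form perturbation bound
  have hQ : ∀ z ∈ Metric.ball x₀ r, ∀ v : En n,
      |D2R n Φ z v v - D2R n Φ x₀ v v| ≤ c/2 * ‖v‖^2 := by
    intro z hz v
    have h1 : D2R n Φ z v v - D2R n Φ x₀ v v
        = (fderiv ℝ (fderiv ℝ Φ) z - fderiv ℝ (fderiv ℝ Φ) x₀) v v := by
      simp [D2R]
    rw [h1, ← Real.norm_eq_abs]
    calc ‖(fderiv ℝ (fderiv ℝ Φ) z - fderiv ℝ (fderiv ℝ Φ) x₀) v v‖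
        ≤ ‖fderiv ℝ (fderiv ℝ Φ) z - fderiv ℝ (fderiv ℝ Φ) x₀‖ * ‖v‖ * ‖v‖ :=
          ContinuousLinearMap.le_opNorm₂ _ _ _
      _ ≤ c/2 * ‖v‖^2 := by
          have hlt : ‖fderiv ℝ (fderiv ℝ Φ) z - fderiv ℝ (fderiv ℝ Φ) x₀‖ ≤ c/2 :=
            le_of_lt (by simpa using (hball hz).2)
          nlinarith [norm_nonneg v, norm_nonneg
            (fderiv ℝ (fderiv ℝ Φ) z - fderiv ℝ (fderiv ℝ Φ) x₀)]
  refine ⟨Metric.ball x₀ r, Metric.isOpen_ball, Metric.mem_ball_self hr, hVΩ,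
    c/2, by linarith, ?_⟩
  intro x hx y hy
  set h := x - y with hh
  -- Taylor lower bound
  have hM : ∀ z ∈ Metric.ball x₀ r,
      D2R n Φ x₀ h h - c/2 * ‖h‖^2 ≤ fderiv ℝ (fderiv ℝ Φ) z (x - y) (x - y) := by
    intro z hz
    have := abs_le.mp (hQ z hz h)
    have heq : fderiv ℝ (fderiv ℝ Φ) z (x - y) (x - y) = D2R n Φ z h h := by rw [← hh]; rfl
    rw [heq]
    linarith [this.1]
  have htaylor := taylor_lower Φ (fderiv ℝ Φ) (fderiv ℝ (fderiv ℝ Φ)) (Metric.ball x₀ r)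
    (convex_ball x₀ r) (fun z hz => hD1 z (hVΩ hz)) (fun z hz => hD2 z (hVΩ hz))
    x y hx hy (D2R n Φ x₀ h h - c/2 * ‖h‖^2) hM
  -- perturbation of the two quadratic terms at y
  have hQ1 := abs_le.mp (hQ y hy h)
  have hQ2 := abs_le.mp (hQ y hy (Complex.I • h))
  have hnI : ‖Complex.I • h‖ = ‖h‖ := by rw [norm_smul, Complex.norm_I, one_mul]
  rw [hnI] at hQ2
  -- Levi form bound at x₀
  have hLb := hcb h
  rw [Levi] at hLb
  -- conclude
  rw [im_dotTheta, ← hh]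
  have e1 := hQ1.1; have e2 := hQ1.2
  have e3 := hQ2.1; have e4 := hQ2.2
  linarith

end
end

section
/- Let V ⊆ ℂⁿ be open, let Φ : V → ℝ be locally Lipschitz, and let V₁ ⋐ V be open. Then there exists C > 0 such that for every h ∈ (0,1] and every holomorphic u : V → ℂ, sup_{x ∈ V₁} |u(x)| e^{−Φ(x)/h} ≤ C h^{−n} ‖u‖_{L²_Φ(V)}. -/
open Complex MeasureTheory

noncomputable section

instance (n : ℕ) : MeasurableSpace (En n) := borel _
instance (n : ℕ) : BorelSpace (En n) := ⟨rfl⟩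
/-- The real inner product structure, giving Lebesgue measure (`volume`) on `ℂⁿ ≅ ℝ^{2n}`. -/
instance (n : ℕ) : InnerProductSpace ℝ (En n) := InnerProductSpace.rclikeToReal ℂ (En n)

open Metric Real


def rot (n : ℕ) (c : ℂ) (hc0 : c ≠ 0) (hc : ‖c‖ = 1) : En n ≃ₗᵢ[ℝ] En n where
  toFun := fun v => c • v
  invFun := fun v => c⁻¹ • v
  map_add' := smul_add c
  map_smul' := fun r v => smul_comm c r v
  left_inv := fun v => inv_smul_smul₀ hc0 v
  right_inv := fun v => smul_inv_smul₀ hc0 v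
  norm_map' := fun v => by rw [LinearEquiv.coe_mk]; exact (norm_smul c v).trans (by rw [hc, one_mul])

lemma circle_mean (f : ℂ → ℂ) (hf : DifferentiableOn ℂ f (closedBall 0 1)) :
    2 * π * ‖f 0‖ ≤ ∫ θ in (0:ℝ)..(2*π), ‖f (circleMap 0 1 θ)‖ := by
  have hdc : DiffContOnCl ℂ f (ball 0 1) := by
    apply DifferentiableOn.diffContOnCl
    rwa [closure_ball (0:ℂ) one_ne_zero]
  have hC := hdc.circleIntegral_sub_inv_smul (mem_ball_self one_pos)
  have key : (2 * π * I) • f 0 = ∫ θ in (0:ℝ)..(2*π), I * f (circleMap 0 1 θ) := by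
    rw [← hC, circleIntegral]
    congr 1
    ext θ
    have hne : circleMap 0 1 θ ≠ 0 := circleMap_ne_center one_ne_zero
    simp [deriv_circleMap, smul_eq_mul]
    field_simp
  have h1 : 2 * π * ‖f 0‖ = ‖(2 * π * I) • f 0‖ := by
    rw [norm_smul]
    simp [norm_mul, Complex.norm_I, abs_of_pos Real.pi_pos]
  rw [h1, key]
  calc ‖∫ θ in (0:ℝ)..(2*π), I * f (circleMap 0 1 θ)‖
      ≤ ∫ θ in (0:ℝ)..(2*π), ‖I * f (circleMap 0 1 θ)‖ :=
        intervalIntegral.norm_integral_le_integral_norm (by positivity)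
    _ = ∫ θ in (0:ℝ)..(2*π), ‖f (circleMap 0 1 θ)‖ := by
        congr 1; ext θ; rw [norm_mul, Complex.norm_I, one_mul]

lemma submean (n : ℕ) (V : Set (En n)) (hV : IsOpen V) (u : En n → ℂ)
    (hu : DifferentiableOn ℂ u V) (x : En n) (ρ : ℝ) (hρ : 0 < ρ)
    (hball : closedBall x ρ ⊆ V) :
    ENNReal.ofReal ‖u x‖ * volume (ball x ρ) ≤ ∫⁻ y in ball x ρ, ENNReal.ofReal ‖u y‖ := by
  -- the affine map z ↦ x + z • v sends closedBall 0 1 into closedBall x ρ for ‖v‖ ≤ ρ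
  have hmem : ∀ v ∈ closedBall (0 : En n) ρ, ∀ z ∈ closedBall (0:ℂ) 1, x + z • v ∈ closedBall x ρ := by
    intro v hv z hz
    rw [mem_closedBall, dist_eq_norm, add_sub_cancel_left, norm_smul]
    rw [mem_closedBall, dist_zero_right] at hz
    rw [mem_closedBall, dist_zero_right] at hv
    calc ‖z‖ * ‖v‖ ≤ 1 * ρ := mul_le_mul hz hv (norm_nonneg v) zero_le_one
      _ = ρ := one_mul ρ
  -- pointwise circle sub-mean value
  have key : ∀ v ∈ closedBall (0 : En n) ρ,
      ENNReal.ofReal (2 * π) * ENNReal.ofReal ‖u x‖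
        ≤ ∫⁻ θ in Set.Ioc 0 (2*π), ENNReal.ofReal ‖u (x + circleMap 0 1 θ • v)‖ := by
    intro v hv
    set f : ℂ → ℂ := fun z => u (x + z • v) with hf
    have hfd : DifferentiableOn ℂ f (closedBall 0 1) := by
      apply DifferentiableOn.comp hu
      · exact (differentiable_id.smul_const v).const_add x |>.differentiableOn
      · intro z hz; exact hball (hmem v hv z hz)
    have h0 : f 0 = u x := by simp [hf]
    have hcm := circle_mean f hfd
    rw [h0] at hcm
    have hcont : Continuous fun θ : ℝ => ‖f (circleMap 0 1 θ)‖ := by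
      apply Continuous.norm
      apply hu.continuousOn.comp_continuous
      · exact continuous_const.add ((continuous_circleMap 0 1).smul continuous_const)
      · intro θ
        exact hball (hmem v hv _ (by simp [mem_closedBall, dist_zero_right, norm_circleMap_zero]))
    have hint : IntegrableOn (fun θ : ℝ => ‖f (circleMap 0 1 θ)‖) (Set.Ioc 0 (2*π)) :=
      hcont.integrableOn_Ioc
    have heq : ∫ θ in (0:ℝ)..(2*π), ‖f (circleMap 0 1 θ)‖
        = ∫ θ in Set.Ioc 0 (2*π), ‖f (circleMap 0 1 θ)‖ :=
      intervalIntegral.integral_of_le (by positivity)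
    calc ENNReal.ofReal (2 * π) * ENNReal.ofReal ‖u x‖
        = ENNReal.ofReal (2 * π * ‖u x‖) := (ENNReal.ofReal_mul (by positivity)).symm
      _ ≤ ENNReal.ofReal (∫ θ in Set.Ioc 0 (2*π), ‖f (circleMap 0 1 θ)‖) := by
          apply ENNReal.ofReal_le_ofReal; rw [← heq]; exact hcm
      _ = ∫⁻ θ in Set.Ioc 0 (2*π), ENNReal.ofReal ‖f (circleMap 0 1 θ)‖ :=
          ofReal_integral_eq_lintegral_ofReal hint
            (Filter.Eventually.of_forall fun θ => norm_nonneg _)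
  -- measurability for Tonelli
  have hphi : Continuous fun p : En n × ℝ => x + circleMap 0 1 p.2 • p.1 :=
    continuous_const.add (((continuous_circleMap 0 1).comp continuous_snd).smul continuous_fst)
  have hTon : AEMeasurable
      (Function.uncurry fun (v : En n) (θ : ℝ) => ENNReal.ofReal ‖u (x + circleMap 0 1 θ • v)‖)
      ((volume.restrict (ball (0:En n) ρ)).prod (volume.restrict (Set.Ioc 0 (2*π)))) := by
    rw [Measure.prod_restrict]
    apply ContinuousOn.aemeasurable
    · apply ENNReal.continuous_ofReal.comp_continuousOn
      apply ContinuousOn.norm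
      apply hu.continuousOn.comp hphi.continuousOn
      rintro ⟨v, θ⟩ ⟨hv, -⟩
      exact hball (hmem v (ball_subset_closedBall hv) _
        (by simp [mem_closedBall, dist_zero_right, norm_circleMap_zero]))
    · exact measurableSet_ball.prod measurableSet_Ioc
  -- per-θ change of variables
  have hrot : ∀ θ : ℝ, (∫⁻ v in ball (0:En n) ρ, ENNReal.ofReal ‖u (x + circleMap 0 1 θ • v)‖)
      = ∫⁻ y in ball x ρ, ENNReal.ofReal ‖u y‖ := by
    intro θ
    have hc0 : circleMap 0 1 θ ≠ 0 := circleMap_ne_center one_ne_zero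
    have hc1 : ‖circleMap 0 1 θ‖ = 1 := by simp [norm_circleMap_zero]
    set e : En n ≃ᵐ En n :=
      ((rot n (circleMap 0 1 θ) hc0 hc1).toMeasurableEquiv).trans (MeasurableEquiv.addLeft x) with he
    have hecoe : ∀ v, e v = x + circleMap 0 1 θ • v := fun v => rfl
    have hecoe' : ⇑e = fun v => x + circleMap 0 1 θ • v := funext hecoe
    have hpres : MeasurePreserving e volume volume := by
      rw [hecoe']
      exact (measurePreserving_add_left volume x).comp
        ((rot n (circleMap 0 1 θ) hc0 hc1).measurePreserving)
    have hpre : e ⁻¹' (ball x ρ) = ball (0:En n) ρ := by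
      ext v
      rw [Set.mem_preimage, hecoe, mem_ball, dist_eq_norm, add_sub_cancel_left, norm_smul, hc1,
        one_mul, mem_ball, dist_zero_right]
    have := (hpres.restrict_preimage (measurableSet_ball : MeasurableSet (ball x ρ))).lintegral_comp_emb
      (e.measurableEmbedding) (fun y => ENNReal.ofReal ‖u y‖)
    rw [hpre] at this
    rw [← this]
    rfl
  have hIoc : volume (Set.Ioc (0:ℝ) (2*π)) = ENNReal.ofReal (2*π) := by
    rw [Real.volume_Ioc, sub_zero]
  have h2π0 : (ENNReal.ofReal (2*π)) ≠ 0 := (ENNReal.ofReal_pos.2 (by positivity)).ne'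
  have chain : ENNReal.ofReal (2*π) * (ENNReal.ofReal ‖u x‖ * volume (ball x ρ))
      ≤ ENNReal.ofReal (2*π) * ∫⁻ y in ball x ρ, ENNReal.ofReal ‖u y‖ := by
    calc ENNReal.ofReal (2*π) * (ENNReal.ofReal ‖u x‖ * volume (ball x ρ))
        = ∫⁻ _v in ball (0:En n) ρ, ENNReal.ofReal (2*π) * ENNReal.ofReal ‖u x‖ := by
          rw [Measure.addHaar_ball_center volume x, setLIntegral_const, mul_assoc]
      _ ≤ ∫⁻ v in ball (0:En n) ρ,
            ∫⁻ θ in Set.Ioc 0 (2*π), ENNReal.ofReal ‖u (x + circleMap 0 1 θ • v)‖ :=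
          setLIntegral_mono' measurableSet_ball (fun v hv => key v (ball_subset_closedBall hv))
      _ = ∫⁻ θ in Set.Ioc 0 (2*π),
            ∫⁻ v in ball (0:En n) ρ, ENNReal.ofReal ‖u (x + circleMap 0 1 θ • v)‖ :=
          lintegral_lintegral_swap hTon
      _ = ∫⁻ _θ in Set.Ioc 0 (2*π), ∫⁻ y in ball x ρ, ENNReal.ofReal ‖u y‖ :=
          lintegral_congr fun θ => hrot θ
      _ = ENNReal.ofReal (2*π) * ∫⁻ y in ball x ρ, ENNReal.ofReal ‖u y‖ := by
          rw [setLIntegral_const, hIoc, mul_comm]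
  exact (ENNReal.mul_le_mul_iff_right h2π0 ENNReal.ofReal_ne_top).1 chain
lemma vol_ball_scale (n : ℕ) (x : En n) {r : ℝ} (hr : 0 < r) :
    volume (ball x r) = ENNReal.ofReal ((r ^ n) ^ 2) * volume (ball (0 : En n) 1) := by
  have hfr : Module.finrank ℝ (En n) = 2 * n := by
    have := Module.finrank_mul_finrank ℝ ℂ (En n)
    rw [Complex.finrank_real_complex] at this
    rw [← this, finrank_euclideanSpace, Fintype.card_fin]
  have hpow : (r ^ n) ^ 2 = r ^ Module.finrank ℝ (En n) := by rw [hfr, ← pow_mul, mul_comm]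
  rcases Nat.eq_zero_or_pos n with h0 | hn
  · subst h0
    have hs : Subsingleton (En 0) := by
      constructor; intro a b; ext i; exact absurd i.2 (by simp)
    have h1 : ball x r = Set.univ := by
      ext y; simp [Subsingleton.elim y x, hr]
    have h2 : ball (0 : En 0) 1 = Set.univ := by
      ext y; simp [Subsingleton.elim y (0 : En 0)]
    simp [h1, h2]
  · have : Nonempty (Fin n) := ⟨⟨0, hn⟩⟩
    have : Nontrivial (En n) := by infer_instance
    rw [hpow]
    exact Measure.addHaar_ball _ x hr.le

lemma uniform_data (n : ℕ) (V : Set (En n)) (hV : IsOpen V) (Φ : En n → ℝ)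
    (hΦ : ∀ x ∈ V, ∃ K : NNReal, ∃ t ∈ nhdsWithin x V, LipschitzOnWith K Φ t)
    (K : Set (En n)) (hK : IsCompact K) (hKV : K ⊆ V) (hne : K.Nonempty) :
    ∃ r₀ : ℝ, 0 < r₀ ∧ ∃ M : NNReal,
      ∀ x ∈ K, closedBall x r₀ ⊆ V ∧ LipschitzOnWith M Φ (closedBall x r₀) := by
  have hdata : ∀ x : En n, x ∈ K →
      ∃ ε : ℝ, 0 < ε ∧ ∃ M : NNReal, ball x ε ⊆ V ∧ LipschitzOnWith M Φ (ball x ε) := by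
    intro x hx
    obtain ⟨Kx, t, ht, hlip⟩ := hΦ x (hKV hx)
    have ht' : t ∈ nhds x := by
      rwa [nhdsWithin_eq_nhds.2 (hV.mem_nhds (hKV hx))] at ht
    have htV : t ∩ V ∈ nhds x := Filter.inter_mem ht' (hV.mem_nhds (hKV hx))
    obtain ⟨ε, hε, hball⟩ := Metric.mem_nhds_iff.1 htV
    exact ⟨ε, hε, Kx, fun y hy => (hball hy).2,
      hlip.mono (fun y hy => (hball hy).1)⟩
  choose! ε hε M hεV hlip using hdata
  obtain ⟨t, htK, hcov⟩ := hK.elim_nhds_subcover (fun x => ball x (ε x / 2))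
    (fun x hx => ball_mem_nhds x (by linarith [hε x hx]))
  have htne : t.Nonempty := by
    obtain ⟨x0, hx0⟩ := hne
    obtain ⟨i, hi, -⟩ := Set.mem_iUnion₂.1 (hcov hx0)
    exact ⟨i, hi⟩
  refine ⟨t.inf' htne ε / 4, ?_, t.sup M, ?_⟩
  · have : ∀ i ∈ t, 0 < ε i := fun i hi => hε i (htK i hi)
    have := Finset.lt_inf'_iff htne (f := ε) (a := 0) |>.2 this
    linarith
  · intro x hx
    obtain ⟨i, hi, hxi⟩ := Set.mem_iUnion₂.1 (hcov hx)
    have hεi : t.inf' htne ε ≤ ε i := Finset.inf'_le ε hi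
    have hsub : closedBall x (t.inf' htne ε / 4) ⊆ ball i (ε i) := by
      intro y hy
      rw [mem_closedBall] at hy
      rw [mem_ball] at hxi ⊢
      have h1 : dist y i ≤ dist y x + dist x i := dist_triangle y x i
      have h2 : 0 < ε i := hε i (htK i hi)
      linarith
    refine ⟨hsub.trans (hεV i (htK i hi)), ?_⟩
    intro a ha b hb
    exact le_trans ((hlip i (htK i hi)).mono hsub ha hb)
      (mul_le_mul_left (ENNReal.coe_le_coe.2 (Finset.le_sup hi)) _)

/-- pointwise bound for holomorphic functions in weighted `L²` spaces:
`sup_{V₁} |u| e^{−Φ/h} ≤ C h^{−n} ‖u‖_{L²_Φ(V)}` (the squared weighted `L²` norm is taken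
as a lower integral, so that no integrability assumption on `u` is needed). -/
theorem statement3 (n : ℕ)
    (V : Set (En n)) (hV : IsOpen V)
    (Φ : En n → ℝ)
    (hΦ : ∀ x ∈ V, ∃ K : NNReal, ∃ t ∈ nhdsWithin x V, LipschitzOnWith K Φ t)
    (V₁ : Set (En n)) (hV₁ : IsOpen V₁)
    (hV₁c : IsCompact (closure V₁)) (hV₁V : closure V₁ ⊆ V) :
    ∃ C : ℝ, 0 < C ∧ ∀ h ∈ Set.Ioc (0:ℝ) 1, ∀ u : En n → ℂ, DifferentiableOn ℂ u V →
      ∀ x ∈ V₁,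
        ENNReal.ofReal (‖u x‖ * Real.exp (-(Φ x) / h))
          ≤ ENNReal.ofReal (C * (h ^ n)⁻¹) *
            (∫⁻ y in V, ENNReal.ofReal (‖u y‖ ^ 2 * Real.exp (-(2 * Φ y) / h))) ^ (1/2 : ℝ) := by
  rcases V₁.eq_empty_or_nonempty with hemp | hne
  · exact ⟨1, one_pos, fun h hh u hu x hx => by
      rw [hemp] at hx; exact absurd hx (Set.notMem_empty x)⟩
  obtain ⟨r₀, hr₀, M, hdata⟩ :=
    uniform_data n V hV Φ hΦ (closure V₁) hV₁c hV₁V hne.closure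
  set κ := volume (ball (0:En n) 1) with hκdef
  have hκ0 : κ ≠ 0 := (measure_ball_pos volume 0 one_pos).ne'
  have hκt : κ ≠ ⊤ := measure_ball_lt_top.ne
  set κh := κ ^ (1/2 : ℝ) with hκhdef
  have hκh0 : κh ≠ 0 := by
    simp only [hκhdef, ne_eq, ENNReal.rpow_eq_zero_iff]
    push_neg
    exact ⟨fun h => absurd h hκ0, fun h => absurd h hκt⟩
  have hκht : κh ≠ ⊤ := by
    simp only [hκhdef, ne_eq, ENNReal.rpow_eq_top_iff]
    push_neg
    exact ⟨fun h => absurd h hκ0, fun h => absurd h hκt⟩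
  set c2 : ℝ := (κh⁻¹).toReal with hc2def
  have hc2 : 0 < c2 :=
    ENNReal.toReal_pos (ENNReal.inv_ne_zero.2 hκht) (ENNReal.inv_ne_top.2 hκh0)
  have hc2' : ENNReal.ofReal c2 = κh⁻¹ := ENNReal.ofReal_toReal (ENNReal.inv_ne_top.2 hκh0)
  refine ⟨Real.exp (M * r₀) * (r₀ ^ n)⁻¹ * c2, by positivity, ?_⟩
  intro h hh u hu x hx
  obtain ⟨hh0, hh1⟩ := hh
  set ρ := r₀ * h with hρdef
  have hρ : 0 < ρ := mul_pos hr₀ hh0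
  have hρr₀ : ρ ≤ r₀ := by nlinarith
  obtain ⟨hbV, hlip⟩ := hdata x (subset_closure hx)
  have hsub : closedBall x ρ ⊆ closedBall x r₀ := closedBall_subset_closedBall hρr₀
  have hballV : ball x ρ ⊆ V := fun y hy => hbV (hsub (ball_subset_closedBall hy))
  -- apply the sub-mean value inequality to u * u
  have hsm := submean n V hV _ (hu.mul hu) x ρ hρ (hsub.trans hbV)
  have hnormsq : ∀ y : En n, ENNReal.ofReal ‖u y * u y‖ = ENNReal.ofReal (‖u y‖ ^ 2) := by
    intro y; rw [norm_mul, sq]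
  simp only [Pi.mul_apply, hnormsq] at hsm
  -- multiply by the weight at x
  set W := ENNReal.ofReal (Real.exp (-(2 * Φ x) / h)) with hWdef
  have hWt : W ≠ ⊤ := ENNReal.ofReal_ne_top
  set I := ∫⁻ y in V, ENNReal.ofReal (‖u y‖ ^ 2 * Real.exp (-(2 * Φ y) / h)) with hIdef
  set E := ENNReal.ofReal (Real.exp (2 * M * r₀)) with hEdef
  set P := ENNReal.ofReal (‖u x‖ ^ 2 * Real.exp (-(2 * Φ x) / h)) with hPdef
  have hkey : P * volume (ball x ρ) ≤ E * I := by
    have hPW : P = W * ENNReal.ofReal (‖u x‖ ^ 2) := by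
      rw [hWdef, hPdef, ← ENNReal.ofReal_mul (Real.exp_nonneg _), mul_comm]
    calc P * volume (ball x ρ) = W * (ENNReal.ofReal (‖u x‖ ^ 2) * volume (ball x ρ)) := by
          rw [hPW, mul_assoc]
      _ ≤ W * ∫⁻ y in ball x ρ, ENNReal.ofReal (‖u y‖ ^ 2) :=
          mul_le_mul_right hsm W
      _ = ∫⁻ y in ball x ρ, W * ENNReal.ofReal (‖u y‖ ^ 2) :=
          (lintegral_const_mul' W _ hWt).symm
      _ ≤ ∫⁻ y in ball x ρ, E * ENNReal.ofReal (‖u y‖ ^ 2 * Real.exp (-(2 * Φ y) / h)) := by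
          apply setLIntegral_mono' measurableSet_ball
          intro y hy
          have hyV : y ∈ closedBall x r₀ := hsub (ball_subset_closedBall hy)
          have hdist : Φ y - Φ x ≤ (M:ℝ) * ρ := by
            have h2 : dist y x ≤ ρ := (mem_ball.1 hy).le
            have h3 : |Φ y - Φ x| ≤ (M:ℝ) * ρ := by
              calc |Φ y - Φ x| = dist (Φ y) (Φ x) := (Real.dist_eq _ _).symm
                _ ≤ (M:ℝ) * dist y x :=
                    hlip.dist_le_mul y hyV x (mem_closedBall_self hr₀.le)
                _ ≤ (M:ℝ) * ρ := mul_le_mul_of_nonneg_left h2 M.coe_nonneg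
            exact le_trans (le_abs_self _) h3
          have harith : (-(2 * Φ x)) / h ≤ 2 * (M:ℝ) * r₀ + (-(2 * Φ y)) / h := by
            have hd : ((-(2 * Φ x)) / h) - ((-(2 * Φ y)) / h) ≤ 2 * (M:ℝ) * r₀ := by
              rw [div_sub_div_same, div_le_iff₀ hh0]
              have h5 : Φ y - Φ x ≤ (M:ℝ) * (r₀ * h) := by rw [← hρdef]; exact hdist
              have h6 := mul_le_mul_of_nonneg_left h5 (by norm_num : (0:ℝ) ≤ 2)
              nlinarith [h6]
            linarith
          have hexp : Real.exp (-(2 * Φ x) / h)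
              ≤ Real.exp (2 * (M:ℝ) * r₀) * Real.exp (-(2 * Φ y) / h) := by
            rw [← Real.exp_add]; exact Real.exp_le_exp.2 harith
          calc W * ENNReal.ofReal (‖u y‖ ^ 2)
              = ENNReal.ofReal (‖u y‖ ^ 2 * Real.exp (-(2 * Φ x) / h)) := by
                rw [hWdef, ← ENNReal.ofReal_mul (Real.exp_nonneg _), mul_comm]
            _ ≤ ENNReal.ofReal (‖u y‖ ^ 2 *
                  (Real.exp (2 * (M:ℝ) * r₀) * Real.exp (-(2 * Φ y) / h))) := by
                apply ENNReal.ofReal_le_ofReal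
                exact mul_le_mul_of_nonneg_left hexp (by positivity)
            _ = E * ENNReal.ofReal (‖u y‖ ^ 2 * Real.exp (-(2 * Φ y) / h)) := by
                rw [hEdef, ← ENNReal.ofReal_mul (Real.exp_nonneg _)]
                congr 1
                ring
      _ ≤ E * I := by
          rw [lintegral_const_mul' E _ ENNReal.ofReal_ne_top]
          exact mul_le_mul_right (lintegral_mono' (Measure.restrict_mono hballV le_rfl) le_rfl) E
  -- volume of the ball
  have hvol : volume (ball x ρ) = ENNReal.ofReal ((ρ ^ n) ^ 2) * κ := vol_ball_scale n x hρ
  have hρn0 : ENNReal.ofReal (ρ ^ n) ≠ 0 := (ENNReal.ofReal_pos.2 (pow_pos hρ n)).ne'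
  have hvol0 : volume (ball x ρ) ≠ 0 := (measure_ball_pos volume x hρ).ne'
  have hvolt : volume (ball x ρ) ≠ ⊤ := measure_ball_lt_top.ne
  -- divide
  have hdiv : P ≤ E * I * (volume (ball x ρ))⁻¹ := by
    have := (ENNReal.le_div_iff_mul_le (Or.inl hvol0) (Or.inl hvolt)).2 hkey
    rwa [div_eq_mul_inv] at this
  -- take square roots
  have hhalf : (0:ℝ) ≤ 1/2 := by norm_num
  have hroot := ENNReal.rpow_le_rpow hdiv hhalf
  -- LHS of root
  have hL : P ^ (1/2 : ℝ) = ENNReal.ofReal (‖u x‖ * Real.exp (-(Φ x) / h)) := by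
    have hsq : ‖u x‖ ^ 2 * Real.exp (-(2 * Φ x) / h)
        = (‖u x‖ * Real.exp (-(Φ x) / h)) ^ 2 := by
      rw [mul_pow, pow_two (Real.exp _), ← Real.exp_add]
      congr 1
      field_simp
      ring
    rw [hPdef, hsq, ENNReal.ofReal_pow (by positivity)]
    rw [← ENNReal.rpow_natCast _ 2, ← ENNReal.rpow_mul]
    norm_num
  -- RHS of root
  have hE : E ^ (1/2:ℝ) = ENNReal.ofReal (Real.exp ((M:ℝ) * r₀)) := by
    have he2 : Real.exp (2*(M:ℝ)*r₀) = (Real.exp ((M:ℝ)*r₀))^2 := by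
      rw [pow_two, ← Real.exp_add]; ring_nf
    rw [hEdef, he2, ENNReal.ofReal_pow (Real.exp_nonneg _), ← ENNReal.rpow_natCast _ 2,
      ← ENNReal.rpow_mul]
    norm_num
  have hv1 : (ENNReal.ofReal ((ρ^n)^2)) ^ (1/2:ℝ) = ENNReal.ofReal (ρ^n) := by
    rw [ENNReal.ofReal_pow (by positivity), ← ENNReal.rpow_natCast _ 2, ← ENNReal.rpow_mul]
    norm_num
  have hvolhalf : (volume (ball x ρ))⁻¹ ^ (1/2:ℝ)
      = ENNReal.ofReal ((ρ^n)⁻¹) * ENNReal.ofReal c2 := by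
    rw [ENNReal.inv_rpow, hvol, ENNReal.mul_rpow_of_nonneg _ _ hhalf, hv1, ← hκhdef,
      ENNReal.mul_inv (Or.inl hρn0) (Or.inl ENNReal.ofReal_ne_top),
      ← ENNReal.ofReal_inv_of_pos (pow_pos hρ n), hc2']
  have hRHS : (E * I * (volume (ball x ρ))⁻¹) ^ (1/2:ℝ)
      = ENNReal.ofReal (Real.exp ((M:ℝ)*r₀)) * I^(1/2:ℝ)
        * (ENNReal.ofReal ((ρ^n)⁻¹) * ENNReal.ofReal c2) := by
    rw [ENNReal.mul_rpow_of_nonneg _ _ hhalf, ENNReal.mul_rpow_of_nonneg _ _ hhalf, hE, hvolhalf]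
  have hC : ENNReal.ofReal (Real.exp ((M:ℝ)*r₀) * (r₀^n)⁻¹ * c2 * (h^n)⁻¹)
      = ENNReal.ofReal (Real.exp ((M:ℝ)*r₀))
        * (ENNReal.ofReal ((ρ^n)⁻¹) * ENNReal.ofReal c2) := by
    have hreal : Real.exp ((M:ℝ)*r₀) * (r₀^n)⁻¹ * c2 * (h^n)⁻¹
        = Real.exp ((M:ℝ)*r₀) * ((ρ^n)⁻¹ * c2) := by
      rw [hρdef, mul_pow]
      have hr0n : (r₀:ℝ)^n ≠ 0 := (pow_pos hr₀ n).ne'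
      have hhn : (h:ℝ)^n ≠ 0 := (pow_pos hh0 n).ne'
      field_simp
    rw [hreal, ENNReal.ofReal_mul (Real.exp_nonneg _), ENNReal.ofReal_mul (by positivity)]
  calc ENNReal.ofReal (‖u x‖ * Real.exp (-(Φ x) / h)) = P ^ (1/2:ℝ) := hL.symm
    _ ≤ (E * I * (volume (ball x ρ))⁻¹) ^ (1/2:ℝ) := hroot
    _ = ENNReal.ofReal (Real.exp ((M:ℝ)*r₀)) * I^(1/2:ℝ)
        * (ENNReal.ofReal ((ρ^n)⁻¹) * ENNReal.ofReal c2) := hRHS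
    _ = ENNReal.ofReal (Real.exp ((M:ℝ)*r₀) * (r₀^n)⁻¹ * c2 * (h^n)⁻¹) * I^(1/2:ℝ) := by
        rw [hC]; ring


end
end
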